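/- Commutation of shift and dilation: for f ∈ 𝓕 and real numbers p, q, a, setting b := p − D_{f,q}^{-1}(p−a), the shifted-then-dilated density equals the dilated-then-shifted density: S_a 𝒟_q f = 𝒟_p S_b f, where S_c h(x,v,r) := h(x−c,v,r). -/
import Mathlib


open MeasureTheory Filter Topology

/-- The mass function `σ_f(x) = ∬ r f(x,v,r) dv dr` of a density `f` on position–velocity–length
space (written in curried form `f x v r`). -/
noncomputable def sigmaF (f : ℝ → ℝ → ℝ → ℝ) (x : ℝ) : ℝ :=
  ∫ p : ℝ × ℝ, p.2 * f x p.1 p.2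

/-- The class `𝓛` of dominating profiles: nonnegative `γ(v,r)` with
`∬ (v² + r² + 1) γ(v,r) dv dr < ∞`. -/
def MemL (γ : ℝ → ℝ → ℝ) : Prop :=
  (∀ v r : ℝ, 0 ≤ γ v r) ∧
  Integrable (fun p : ℝ × ℝ => (p.1 ^ 2 + p.2 ^ 2 + 1) * γ p.1 p.2)

/-- The class `𝓕_γ`: nonnegative measurable densities `f(x,v,r)`, `C¹` in `x`, with `f` and
`∂ₓ f` dominated by `γ(v,r)`. -/
def MemFgamma (f : ℝ → ℝ → ℝ → ℝ) (γ : ℝ → ℝ → ℝ) : Prop :=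
  Measurable (fun p : ℝ × ℝ × ℝ => f p.1 p.2.1 p.2.2) ∧
  (∀ x v r : ℝ, 0 ≤ f x v r) ∧
  (∀ v r : ℝ, ContDiff ℝ 1 fun x => f x v r) ∧
  (∀ x v r : ℝ, f x v r ≤ γ v r) ∧
  (∀ x v r : ℝ, |deriv (fun x' => f x' v r) x| ≤ γ v r)

/-- The class `𝓕` of admissible densities: `f ∈ 𝓕_γ` for some `γ ∈ 𝓛`, with everywhere
positive mass function `σ_f`. -/
def MemF (f : ℝ → ℝ → ℝ → ℝ) : Prop :=
  (∃ γ, MemL γ ∧ MemFgamma f γ) ∧ ∀ x : ℝ, 0 < sigmaF f x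

/-- The class `𝓖` of dilated densities: `g ∈ 𝓕` with `‖σ_g‖_∞ < 1`. -/
def MemG (g : ℝ → ℝ → ℝ → ℝ) : Prop :=
  MemF g ∧ ∃ c : ℝ, c < 1 ∧ ∀ x : ℝ, sigmaF g x ≤ c

/-- The dilation function `D_{f,a}(b) = b + ∫_a^b σ_f(x) dx`. -/
noncomputable def Dfun (f : ℝ → ℝ → ℝ → ℝ) (a b : ℝ) : ℝ :=
  b + ∫ x in a..b, sigmaF f x

/-- The contraction function `C_{g,a}(b) = b - ∫_a^b σ_g(y) dy`. -/
noncomputable def Cfun (g : ℝ → ℝ → ℝ → ℝ) (a b : ℝ) : ℝ :=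
  b - ∫ x in a..b, sigmaF g x

/-- The dilation operator `𝒟_q f (y,v,r) = f(D_{f,q}⁻¹(y),v,r) / (1 + σ_f(D_{f,q}⁻¹(y)))`. -/
noncomputable def Dop (f : ℝ → ℝ → ℝ → ℝ) (q : ℝ) : ℝ → ℝ → ℝ → ℝ :=
  fun y v r =>
    f (Function.invFun (Dfun f q) y) v r / (1 + sigmaF f (Function.invFun (Dfun f q) y))

/-- The contraction operator `𝒞_q g (x,v,r) = g(C_{g,q}⁻¹(x),v,r) / (1 - σ_g(C_{g,q}⁻¹(x)))`. -/
noncomputable def Cop (g : ℝ → ℝ → ℝ → ℝ) (q : ℝ) : ℝ → ℝ → ℝ → ℝ :=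
  fun x v r =>
    g (Function.invFun (Cfun g q) x) v r / (1 - sigmaF g (Function.invFun (Cfun g q) x))

/-- The spatial shift operator `S_c h (x,v,r) = h(x - c, v, r)`. -/
def Sop (c : ℝ) (h : ℝ → ℝ → ℝ → ℝ) : ℝ → ℝ → ℝ → ℝ := fun x v r => h (x - c) v r

/-- The free (ideal gas) evolution `𝒯_t f (x,v,r) = f(x - v t, v, r)`. -/
def Tfree (t : ℝ) (f : ℝ → ℝ → ℝ → ℝ) : ℝ → ℝ → ℝ → ℝ := fun x v r => f (x - v * t) v r

/-- The mass flow `j_f⁺(x,v,t) = ∫_{w<v} ∫_x^{x+(v-w)t} ∫ r f(z,w,r) dr dz dw`: the mass with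
speed less than `v` crossing the trajectory `s ↦ x + v s` during `[0,t]`. -/
noncomputable def jplus (f : ℝ → ℝ → ℝ → ℝ) (x v t : ℝ) : ℝ :=
  ∫ w in Set.Iio v, (∫ z in x..(x + (v - w) * t), (∫ r : ℝ, r * f z w r))

/-- The mass flow `j_f⁻(x,v,t) = ∫_{w>v} ∫_{x+(v-w)t}^x ∫ r f(z,w,r) dr dz dw`: the mass with
speed greater than `v` crossing the trajectory `s ↦ x + v s` during `[0,t]`. -/
noncomputable def jminus (f : ℝ → ℝ → ℝ → ℝ) (x v t : ℝ) : ℝ :=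
  ∫ w in Set.Ioi v, (∫ z in (x + (v - w) * t)..x, (∫ r : ℝ, r * f z w r))

/-- The net mass flow `j_f = j_f⁺ - j_f⁻`. -/
noncomputable def jflow (f : ℝ → ℝ → ℝ → ℝ) (x v t : ℝ) : ℝ := jplus f x v t - jminus f x v t

/-- The macroscopic quasiparticle position `u_{g,v,t}(q) = q + v t + j_{𝒞_q g}(q,v,t)`. -/
noncomputable def uqp (g : ℝ → ℝ → ℝ → ℝ) (v t q : ℝ) : ℝ :=
  q + v * t + jflow (Cop g q) q v t

/-- The hard-rod evolution operator `𝒰_t g = S_{o_t} 𝒟_0 𝒯_t 𝒞_0 g` with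
`o_t = j_{𝒞_0 g}(0,0,t)`. -/
noncomputable def Uop (t : ℝ) (g : ℝ → ℝ → ℝ → ℝ) : ℝ → ℝ → ℝ → ℝ :=
  Sop (jflow (Cop g 0) 0 0 t) (Dop (Tfree t (Cop g 0)) 0)

-- continuity of sigma
lemma sigma_cont (f : ℝ → ℝ → ℝ → ℝ) (hf : MemF f) : Continuous (sigmaF f) := by
  obtain ⟨⟨γ, ⟨hγ0, hγint⟩, hmeas, hf0, hfc1, hfbd, _⟩, _⟩ := hf
  apply continuous_of_dominated (bound := fun p : ℝ × ℝ => (p.1 ^ 2 + p.2 ^ 2 + 1) * γ p.1 p.2)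
  · intro x
    exact ((measurable_snd.snd.mul hmeas).comp
      (measurable_const.prodMk measurable_id)).aestronglyMeasurable
  · intro x
    filter_upwards with p
    have h1 := hf0 x p.1 p.2
    have h2 := hfbd x p.1 p.2
    have h3 : |p.2| ≤ p.1 ^ 2 + p.2 ^ 2 + 1 := by
      rcases abs_cases p.2 with ⟨h, _⟩ | ⟨h, _⟩ <;> nlinarith [sq_nonneg p.1, sq_nonneg (p.2 - 1), sq_nonneg (p.2 + 1)]
    calc ‖p.2 * f x p.1 p.2‖ = |p.2| * f x p.1 p.2 := by
          rw [norm_mul, Real.norm_eq_abs, Real.norm_eq_abs, abs_of_nonneg h1]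
      _ ≤ (p.1 ^ 2 + p.2 ^ 2 + 1) * γ p.1 p.2 := by
          apply mul_le_mul h3 (h2) h1 (by positivity)
  · exact hγint
  · filter_upwards with p
    exact continuous_const.mul (hfc1 p.1 p.2).continuous

lemma Dfun_hasDerivAt (f : ℝ → ℝ → ℝ → ℝ) (hf : MemF f) (q x : ℝ) :
    HasDerivAt (Dfun f q) (1 + sigmaF f x) x := by
  have hc := sigma_cont f hf
  exact (hasDerivAt_id x).add
    (intervalIntegral.integral_hasDerivAt_right (hc.intervalIntegrable q x)
      (hc.stronglyMeasurableAtFilter _ _) hc.continuousAt)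

lemma Dfun_strictMono (f : ℝ → ℝ → ℝ → ℝ) (hf : MemF f) (q : ℝ) :
    StrictMono (Dfun f q) := by
  apply strictMono_of_deriv_pos
  intro x
  rw [(Dfun_hasDerivAt f hf q x).deriv]
  linarith [hf.2 x]

lemma Dfun_surj (f : ℝ → ℝ → ℝ → ℝ) (hf : MemF f) (q : ℝ) :
    Function.Surjective (Dfun f q) := by
  have hc : Continuous (Dfun f q) := by
    rw [continuous_iff_continuousAt]
    exact fun x => (Dfun_hasDerivAt f hf q x).continuousAt
  apply Continuous.surjective hc
  · apply tendsto_atTop_mono' _ _ tendsto_id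
    filter_upwards [eventually_ge_atTop q] with x hx
    have : 0 ≤ ∫ z in q..x, sigmaF f z :=
      intervalIntegral.integral_nonneg hx fun u _ => (hf.2 u).le
    simp only [Dfun, id]; linarith
  · apply tendsto_atBot_mono' _ _ tendsto_id
    filter_upwards [eventually_le_atBot q] with x hx
    have : 0 ≤ ∫ z in x..q, sigmaF f z :=
      intervalIntegral.integral_nonneg hx fun u _ => (hf.2 u).le
    rw [intervalIntegral.integral_symm] at this
    simp only [Dfun, id]; linarith

/-- Commutation of shift and dilation: for `f ∈ 𝓕` and `b := p - D_{f,q}⁻¹(p - a)`,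
`S_a 𝒟_q f = 𝒟_p S_b f`. -/
theorem stmt10 (f : ℝ → ℝ → ℝ → ℝ) (hf : MemF f) (p q a : ℝ) :
    ∀ y v r : ℝ,
      Sop a (Dop f q) y v r =
        Dop (Sop (p - Function.invFun (Dfun f q) (p - a)) f) p y v r := by
  have hc := sigma_cont f hf
  have hmono := Dfun_strictMono f hf q
  have hsurj := Dfun_surj f hf q
  have hright : ∀ y, Dfun f q (Function.invFun (Dfun f q) y) = y :=
    Function.rightInverse_invFun hsurj
  set c : ℝ := Function.invFun (Dfun f q) (p - a) with hc_def
  set b : ℝ := p - c with hb_def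
  -- sigma of shifted f
  have hsig : sigmaF (Sop b f) = fun z => sigmaF f (z - b) := rfl
  -- key functional identity
  have hkey : Dfun (Sop b f) p = fun x => Dfun f q (x - b) + a := by
    funext x
    have hcomp : (∫ z in p..x, sigmaF f (z - b)) = ∫ z in (p - b)..(x - b), sigmaF f z :=
      intervalIntegral.integral_comp_sub_right (fun z => sigmaF f z) b
    have hpb : p - b = c := by ring
    have hadj : (∫ z in c..q, sigmaF f z) + (∫ z in q..(x - b), sigmaF f z)
        = ∫ z in c..(x - b), sigmaF f z :=
      intervalIntegral.integral_add_adjacent_intervals (hc.intervalIntegrable _ _)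
        (hc.intervalIntegrable _ _)
    have hcval : Dfun f q c = p - a := hright _
    have hqc : (∫ z in q..c, sigmaF f z) = p - a - c := by
      have : c + (∫ z in q..c, sigmaF f z) = p - a := hcval
      linarith
    have hsymm : (∫ z in c..q, sigmaF f z) = -(p - a - c) := by
      rw [intervalIntegral.integral_symm, hqc]
    simp only [Dfun, hsig]
    rw [hcomp, hpb, ← hadj, hsymm]
    ring
  -- the inverse of the shifted dilation
  have hinj : Function.Injective (Dfun (Sop b f) p) := by
    rw [hkey]
    intro u w h
    simp only at h
    have h2 : Dfun f q (u - b) = Dfun f q (w - b) := by linarith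
    have := hmono.injective h2
    linarith
  have hinv : ∀ y : ℝ, Function.invFun (Dfun (Sop b f) p) y =
      Function.invFun (Dfun f q) (y - a) + b := by
    intro y
    have hx0 : Dfun (Sop b f) p (Function.invFun (Dfun f q) (y - a) + b) = y := by
      rw [hkey]
      simp only [add_sub_cancel_right]
      rw [hright (y - a)]
      ring
    conv_lhs => rw [← hx0]
    exact Function.leftInverse_invFun hinj _
  intro y v r
  simp only [Sop, Dop, hinv y, hsig, add_sub_cancel_right]
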